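/- Fix 0 ≤ s < r and let t = t(n) = o(√N₁). If p = p(n) satisfies p = o(n^{-s/t}/N₁), then the probability that G_p(n,r,s) contains a cycle of length t tends to 0 as n → ∞. -/

import Mathlib

open Filter

def johnsonGraph (n r s : ℕ) : SimpleGraph {x : Finset (Fin n) // x.card = r} where
  Adj x y := x ≠ y ∧ ((x : Finset (Fin n)) ∩ (y : Finset (Fin n))).card = s
  symm := ⟨fun x y h => ⟨h.1.symm, by rw [Finset.inter_comm]; exact h.2⟩⟩
  loopless := ⟨fun x h => h.1 rfl⟩

/-- the number of subgraphs of `G` isomorphic to the cycle on `t` vertices -/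
noncomputable def cycleCount {V : Type*} (G : SimpleGraph V) (t : ℕ) : ℕ :=
  Set.ncard {H : G.Subgraph | Nonempty (H.coe ≃g SimpleGraph.cycleGraph t)}

/-- the common degree `N₁ = choose r s * choose (n-r) (r-s)` of `G(n,r,s)` -/
def N1 (n r s : ℕ) : ℕ := r.choose s * (n - r).choose (r - s)

open Classical in
/-- expectation of `f` under the binomial random subgraph of `G` where each edge is kept
independently with probability `p` -/
noncomputable def randomSubgraphExp {V : Type*} [Fintype V] (G : SimpleGraph V) (p : ℝ)
    (f : SimpleGraph V → ℝ) : ℝ :=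
  ∑ S ∈ G.edgeFinset.powerset,
    p ^ S.card * (1 - p) ^ (G.edgeFinset.card - S.card) * f (SimpleGraph.fromEdgeSet ↑S)

/-- `E X`, the expected number of copies of `C_t` in `G_p(n,r,s)` -/
noncomputable def EX (n r s t : ℕ) (p : ℝ) : ℝ :=
  randomSubgraphExp (johnsonGraph n r s) p (fun H => (cycleCount H t : ℝ))

/-- `Var X`, the variance of the number of copies of `C_t` in `G_p(n,r,s)` -/
noncomputable def VarX (n r s t : ℕ) (p : ℝ) : ℝ :=
  randomSubgraphExp (johnsonGraph n r s) p
    (fun H => ((cycleCount H t : ℝ) - EX n r s t p) ^ 2)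

open Classical in
/-- the probability that `G_p(n,r,s)` contains a cycle of length `t` -/
noncomputable def probContainsCycle (n r s t : ℕ) (p : ℝ) : ℝ :=
  randomSubgraphExp (johnsonGraph n r s) p
    (fun H => if ∃ (v : {x : Finset (Fin n) // x.card = r}) (w : H.Walk v v),
        w.IsCycle ∧ w.length = t then 1 else 0)


section Aux
open Finset SimpleGraph


/-- binomial identity: total weight is 1 -/
lemma sum_pow_weights {α : Type*} [DecidableEq α] (D : Finset α) (p : ℝ) :
    ∑ T ∈ D.powerset, p ^ T.card * (1 - p) ^ (D.card - T.card) = 1 := by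
  have h := Finset.prod_add (fun _ : α => p) (fun _ : α => 1 - p) D
  simp only [add_sub_cancel, Finset.prod_const_one, Finset.prod_const] at h
  calc ∑ T ∈ D.powerset, p ^ T.card * (1 - p) ^ (D.card - T.card)
      = ∑ T ∈ D.powerset, p ^ T.card * (1 - p) ^ (D \ T).card := by
        exact Finset.sum_congr rfl fun T hT => by
          rw [Finset.card_sdiff_of_subset (Finset.mem_powerset.mp hT)]
    _ = 1 := h.symm

/-- probability that a fixed edge set `F` is contained in the random subset -/
lemma sum_weight_superset {α : Type*} [DecidableEq α] (E F : Finset α) (hF : F ⊆ E) (p : ℝ) :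
    ∑ S ∈ E.powerset, p ^ S.card * (1 - p) ^ (E.card - S.card) * (if F ⊆ S then 1 else 0)
      = p ^ F.card := by
  classical
  simp only [mul_ite, mul_one, mul_zero]
  rw [← Finset.sum_filter]
  rw [Finset.sum_nbij' (i := fun S => S \ F) (j := fun T => T ∪ F)
    (t := (E \ F).powerset)
    (g := fun T => p ^ F.card * (p ^ T.card * (1 - p) ^ ((E \ F).card - T.card)))]
  · rw [← Finset.mul_sum, sum_pow_weights, mul_one]
  · intro S hS
    simp only [Finset.mem_filter, Finset.mem_powerset] at hS
    simp only [Finset.mem_powerset]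
    exact Finset.sdiff_subset_sdiff hS.1 le_rfl
  · intro T hT
    simp only [Finset.mem_powerset] at hT
    simp only [Finset.mem_filter, Finset.mem_powerset]
    refine ⟨Finset.union_subset (hT.trans Finset.sdiff_subset) hF, Finset.subset_union_right⟩
  · intro S hS
    simp only [Finset.mem_filter, Finset.mem_powerset] at hS
    rw [Finset.sdiff_union_of_subset hS.2]
  · intro T hT
    simp only [Finset.mem_powerset] at hT
    rw [Finset.union_sdiff_right]
    exact Finset.sdiff_eq_self_of_disjoint (Finset.disjoint_of_subset_left hT
      (Finset.sdiff_disjoint)) |>.symm ▸ rfl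
  · intro S hS
    simp only [Finset.mem_filter, Finset.mem_powerset] at hS
    have hcard : S.card = (S \ F).card + F.card := by
      rw [Finset.card_sdiff_of_subset hS.2]
      have := Finset.card_le_card hS.2
      omega
    have hE : (E \ F).card = E.card - F.card := Finset.card_sdiff_of_subset hF
    have h2 : E.card - S.card = (E \ F).card - (S \ F).card := by
      have hSE : S.card ≤ E.card := Finset.card_le_card hS.1
      have hFE : F.card ≤ E.card := Finset.card_le_card hF
      omega
    rw [hcard, pow_add, show E.card - ((S \ F).card + F.card) = (E \ F).card - (S \ F).card
      from by rw [← hcard]; exact h2]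
    ring



/-- number of walks of length `k+1` between two fixed vertices is at most `d^k`
when all degrees are at most `d` -/
lemma count_walks {V : Type*} [Fintype V] [DecidableEq V] (G : SimpleGraph V)
    [DecidableRel G.Adj] (d : ℕ) (hd : ∀ v, G.degree v ≤ d) :
    ∀ (k : ℕ) (u v : V), (G.finsetWalkLength (k + 1) u v).card ≤ d ^ k := by
  have step : ∀ (m : ℕ) (u v : V), (G.finsetWalkLength (m + 1) u v).card ≤
      ∑ w : G.neighborSet u, (G.finsetWalkLength m w v).card := by
    intro m u v
    rw [show G.finsetWalkLength (m + 1) u v = Finset.univ.biUnion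
        (fun (w : G.neighborSet u) => (G.finsetWalkLength m w v).map
          ⟨fun p => Walk.cons w.property p, fun _ _ h => by cases h; rfl⟩) from rfl]
    refine (Finset.card_biUnion_le).trans ?_
    exact Finset.sum_le_sum fun w _ => by rw [Finset.card_map]
  intro k
  induction k with
  | zero =>
    intro u v
    refine (step 0 u v).trans ?_
    have h0 : ∀ x : G.neighborSet u, (G.finsetWalkLength 0 (x : V) v).card
        ≤ if (x : V) = v then 1 else 0 := by
      intro x
      split_ifs with h
      · refine Finset.card_le_one.mpr fun a ha b hb => ?_
        rw [mem_finsetWalkLength_iff] at ha hb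
        subst h
        rw [Walk.length_eq_zero_iff] at ha hb
        rw [ha.eq_nil, hb.eq_nil]
      · refine le_of_eq (Finset.card_eq_zero.mpr (Finset.eq_empty_iff_forall_notMem.mpr
          fun a ha => ?_))
        rw [mem_finsetWalkLength_iff] at ha
        exact h (Walk.eq_of_length_eq_zero ha)
    refine (Finset.sum_le_sum fun w _ => h0 w).trans ?_
    rw [Finset.sum_boole]
    simp only [pow_zero]
    refine Finset.card_le_one.mpr fun a ha b hb => ?_
    simp only [Finset.mem_filter] at ha hb
    exact Subtype.ext (ha.2.trans hb.2.symm)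
  | succ k ih =>
    intro u v
    refine (step (k + 1) u v).trans ?_
    refine (Finset.sum_le_sum (g := fun _ => d ^ k) fun w _ => ih w.1 v).trans ?_
    rw [Finset.sum_const, Finset.card_univ, card_neighborSet_eq_degree, smul_eq_mul, pow_succ']
    exact Nat.mul_le_mul_right _ (hd u)


lemma johnson_degree_le (n r s : ℕ) [DecidableRel (johnsonGraph n r s).Adj]
    (x : {x : Finset (Fin n) // x.card = r}) :
    (johnsonGraph n r s).degree x ≤ N1 n r s := by
  classical
  rw [← card_neighborFinset_eq_degree]
  have h := Finset.card_le_card_of_injOn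
    (f := fun y : {x : Finset (Fin n) // x.card = r} => ((y : Finset (Fin n)) ∩ x, (y : Finset (Fin n)) \ x))
    (s := (johnsonGraph n r s).neighborFinset x)
    (t := (Finset.powersetCard s (x : Finset (Fin n))) ×ˢ
      (Finset.powersetCard (r - s) ((x : Finset (Fin n))ᶜ)))
    ?_ ?_
  · refine h.trans (le_of_eq ?_)
    rw [Finset.card_product, Finset.card_powersetCard, Finset.card_powersetCard,
      Finset.card_compl, Fintype.card_fin, x.prop]
    rfl
  · intro y hy
    rw [Finset.mem_coe, mem_neighborFinset] at hy
    obtain ⟨hne, hcard⟩ := hy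
    have hyx : ((y : Finset (Fin n)) ∩ x).card = s := by rw [Finset.inter_comm]; exact hcard
    have hsd : ((y : Finset (Fin n)) \ x).card + s = r := by
      rw [← hyx, Finset.card_sdiff_add_card_inter, y.prop]
    rw [Finset.mem_coe, Finset.mem_product, Finset.mem_powersetCard, Finset.mem_powersetCard]
    refine ⟨⟨Finset.inter_subset_right, hyx⟩, ⟨fun i hi => ?_, ?_⟩⟩
    · rw [Finset.mem_compl]
      exact (Finset.mem_sdiff.mp hi).2
    · show ((y : Finset (Fin n)) \ (x : Finset (Fin n))).card = r - s
      omega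
  · intro y₁ h₁ y₂ h₂ heq
    simp only [Prod.mk.injEq] at heq
    refine Subtype.ext ?_
    rw [← Finset.sdiff_union_inter (y₁ : Finset (Fin n)) (x : Finset (Fin n)),
      ← Finset.sdiff_union_inter (y₂ : Finset (Fin n)) (x : Finset (Fin n)), heq.1, heq.2]

/-- the crude bound `C(n,r) ≤ 2^r · r! · n^s · N₁` for `n ≥ 4r+4` -/
lemma choose_le_N1 (r s : ℕ) (hs : s ≤ r) (n : ℕ) (hn : 4 * r + 4 ≤ n) :
    n.choose r ≤ 2 ^ r * r.factorial * (n ^ s * N1 n r s) := by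
  have h1 : n.choose r ≤ n ^ r := Nat.choose_le_pow n r
  have h2 : n ^ r = n ^ s * n ^ (r - s) := by
    rw [← pow_add]
    congr 1
    omega
  have h3 : n ^ (r - s) ≤ 2 ^ (r - s) * (n - r + 1 - (r - s)) ^ (r - s) := by
    rw [← mul_pow]
    refine Nat.pow_le_pow_left ?_ _
    omega
  have h4 : (n - r + 1 - (r - s)) ^ (r - s) ≤ (r - s).factorial * (n - r).choose (r - s) := by
    rw [← Nat.descFactorial_eq_factorial_mul_choose]
    exact Nat.pow_sub_le_descFactorial (n - r) (r - s)
  have h5 : (r - s).factorial * (n - r).choose (r - s) ≤ r.factorial * N1 n r s := by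
    unfold N1
    calc (r - s).factorial * (n - r).choose (r - s)
        ≤ r.factorial * (n - r).choose (r - s) :=
          Nat.mul_le_mul_right _ (Nat.factorial_le (by omega))
      _ ≤ r.factorial * (r.choose s * (n - r).choose (r - s)) := by
          refine Nat.mul_le_mul_left _ ?_
          exact Nat.le_mul_of_pos_left _ (Nat.choose_pos hs)
  calc n.choose r ≤ n ^ s * n ^ (r - s) := by rw [← h2]; exact h1
    _ ≤ n ^ s * (2 ^ (r - s) * ((r - s).factorial * (n - r).choose (r - s))) := by
        refine Nat.mul_le_mul_left _ (h3.trans ?_)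
        exact Nat.mul_le_mul_left _ h4
    _ ≤ n ^ s * (2 ^ r * (r.factorial * N1 n r s)) := by
        refine Nat.mul_le_mul_left _ (Nat.mul_le_mul (Nat.pow_le_pow_right (by norm_num) (by omega)) h5)
    _ = 2 ^ r * r.factorial * (n ^ s * N1 n r s) := by ring


open Classical in
lemma exp_le {V : Type*} [Fintype V] [DecidableEq V] (G : SimpleGraph V) [DecidableRel G.Adj]
    [Fintype G.edgeSet] (T : ℕ) (hT : 1 ≤ T) (d : ℕ) (hd : ∀ v : V, G.degree v ≤ d)
    (p : ℝ) (hp0 : 0 ≤ p) (hp1 : p ≤ 1) :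
    ∑ S ∈ G.edgeFinset.powerset, p ^ S.card * (1 - p) ^ (G.edgeFinset.card - S.card) *
      (if ∃ (v : V) (w : (SimpleGraph.fromEdgeSet (S : Set (Sym2 V))).Walk v v),
          w.IsCycle ∧ w.length = T then (1 : ℝ) else 0)
      ≤ (Fintype.card V : ℝ) * (d : ℝ) ^ (T - 1) * p ^ T := by
  set E := G.edgeFinset with hEdef
  -- the per-walk indicator
  set χ : (Σ v : V, G.Walk v v) → Finset (Sym2 V) → ℝ := fun w S =>
    if w.2.edges.toFinset ⊆ S ∧ w.2.edges.toFinset.card = T then 1 else 0 with hχ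
  have hχnonneg : ∀ w S, 0 ≤ χ w S := by
    intro w S; rw [hχ]; dsimp only; split_ifs <;> norm_num
  -- Step 1 : indicator is at most the sum of per-walk indicators
  have hind : ∀ S ∈ E.powerset,
      (if ∃ (v : V) (w : (SimpleGraph.fromEdgeSet (S : Set (Sym2 V))).Walk v v),
          w.IsCycle ∧ w.length = T then (1 : ℝ) else 0)
        ≤ ∑ v : V, ∑ w ∈ G.finsetWalkLength T v v, χ ⟨v, w⟩ S := by
    intro S hS
    split_ifs with h
    · obtain ⟨v, w₀, hc, hl⟩ := h
      have hsub : ∀ e ∈ w₀.edges, e ∈ G.edgeSet := by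
        intro e he
        have h1 := w₀.edges_subset_edgeSet he
        rw [SimpleGraph.edgeSet_fromEdgeSet] at h1
        exact SimpleGraph.mem_edgeFinset.mp (Finset.mem_powerset.mp hS h1.1)
      set w' := w₀.transfer G hsub with hw'
      have hmem : w' ∈ G.finsetWalkLength T v v := by
        rw [SimpleGraph.mem_finsetWalkLength_iff, hw', SimpleGraph.Walk.length_transfer]
        exact hl
      have hterm : χ ⟨v, w'⟩ S = 1 := by
        rw [hχ]
        dsimp only
        rw [if_pos]
        constructor
        · intro e he
          rw [List.mem_toFinset, hw', SimpleGraph.Walk.edges_transfer] at he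
          have h1 := w₀.edges_subset_edgeSet he
          rw [SimpleGraph.edgeSet_fromEdgeSet] at h1
          exact h1.1
        · rw [hw', SimpleGraph.Walk.edges_transfer,
            List.toFinset_card_of_nodup hc.edges_nodup, SimpleGraph.Walk.length_edges, hl]
      calc (1 : ℝ) = χ ⟨v, w'⟩ S := hterm.symm
        _ ≤ ∑ w ∈ G.finsetWalkLength T v v, χ ⟨v, w⟩ S :=
            Finset.single_le_sum (fun w _ => hχnonneg ⟨v, w⟩ S) hmem
        _ ≤ ∑ v : V, ∑ w ∈ G.finsetWalkLength T v v, χ ⟨v, w⟩ S :=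
            Finset.single_le_sum
              (f := fun v => ∑ w ∈ G.finsetWalkLength T v v, χ ⟨v, w⟩ S)
              (fun v _ => Finset.sum_nonneg fun w _ => hχnonneg ⟨v, w⟩ S) (Finset.mem_univ v)
    · exact Finset.sum_nonneg fun v _ => Finset.sum_nonneg fun w _ => hχnonneg ⟨v, w⟩ S
  -- Step 2 : expectation of each per-walk indicator is at most p^T
  have hinner : ∀ (v : V) (w : G.Walk v v),
      ∑ S ∈ E.powerset, p ^ S.card * (1 - p) ^ (E.card - S.card) * χ ⟨v, w⟩ S ≤ p ^ T := by
    intro v w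
    by_cases hcard : w.edges.toFinset.card = T
    · have hFE : w.edges.toFinset ⊆ E := fun e he =>
        SimpleGraph.mem_edgeFinset.mpr (w.edges_subset_edgeSet (List.mem_toFinset.mp he))
      have : ∑ S ∈ E.powerset, p ^ S.card * (1 - p) ^ (E.card - S.card) * χ ⟨v, w⟩ S
          = ∑ S ∈ E.powerset, p ^ S.card * (1 - p) ^ (E.card - S.card) *
            (if w.edges.toFinset ⊆ S then 1 else 0) := by
        refine Finset.sum_congr rfl fun S _ => ?_
        rw [hχ]
        dsimp only
        congr 1
        by_cases h : w.edges.toFinset ⊆ S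
        · rw [if_pos ⟨h, hcard⟩, if_pos h]
        · rw [if_neg (fun hh => h hh.1), if_neg h]
      rw [this, sum_weight_superset E _ hFE p, hcard]
    · have hz : ∀ S, χ ⟨v, w⟩ S = 0 := by
        intro S; rw [hχ]; dsimp only; exact if_neg fun hh => hcard hh.2
      simp only [hz, mul_zero, Finset.sum_const_zero]
      exact pow_nonneg hp0 T
  -- Step 3 : put everything together
  calc ∑ S ∈ E.powerset, p ^ S.card * (1 - p) ^ (E.card - S.card) *
        (if ∃ (v : V) (w : (SimpleGraph.fromEdgeSet (S : Set (Sym2 V))).Walk v v),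
          w.IsCycle ∧ w.length = T then (1 : ℝ) else 0)
      ≤ ∑ S ∈ E.powerset, p ^ S.card * (1 - p) ^ (E.card - S.card) *
          ∑ v : V, ∑ w ∈ G.finsetWalkLength T v v, χ ⟨v, w⟩ S :=
        Finset.sum_le_sum fun S hS => mul_le_mul_of_nonneg_left (hind S hS)
          (mul_nonneg (pow_nonneg hp0 _) (pow_nonneg (by linarith) _))
    _ = ∑ v : V, ∑ w ∈ G.finsetWalkLength T v v,
          ∑ S ∈ E.powerset, p ^ S.card * (1 - p) ^ (E.card - S.card) * χ ⟨v, w⟩ S := by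
        simp_rw [Finset.mul_sum]
        rw [Finset.sum_comm]
        exact Finset.sum_congr rfl fun v _ => Finset.sum_comm
    _ ≤ ∑ v : V, ∑ w ∈ G.finsetWalkLength T v v, p ^ T :=
        Finset.sum_le_sum fun v _ => Finset.sum_le_sum fun w _ => hinner v w
    _ = ∑ v : V, ((G.finsetWalkLength T v v).card : ℝ) * p ^ T := by
        simp [Finset.sum_const, nsmul_eq_mul]
    _ ≤ ∑ _v : V, (d : ℝ) ^ (T - 1) * p ^ T := by
        refine Finset.sum_le_sum fun v _ => mul_le_mul_of_nonneg_right ?_ (pow_nonneg hp0 T)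
        have hcount := count_walks G d hd (T - 1) v v
        rw [show T - 1 + 1 = T from by omega] at hcount
        calc ((G.finsetWalkLength T v v).card : ℝ) ≤ ((d ^ (T - 1) : ℕ) : ℝ) :=
              Nat.cast_le.mpr hcount
          _ = (d : ℝ) ^ (T - 1) := by push_cast; ring
    _ = (Fintype.card V : ℝ) * (d : ℝ) ^ (T - 1) * p ^ T := by
        rw [Finset.sum_const, Finset.card_univ, nsmul_eq_mul, mul_assoc]


end Aux

/-- 0-statement: if `t = o(√N₁)` and `p = o(n^(-s/t) / N₁)`, then
`P(C_t ⊆ G_p(n,r,s)) → 0`. -/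
theorem stmt17 (r s : ℕ) (hs : s < r) (t : ℕ → ℕ) (ht3 : ∀ n, 3 ≤ t n)
    (hto : Tendsto (fun n : ℕ => (t n : ℝ) / Real.sqrt (N1 n r s)) atTop (nhds 0))
    (p : ℕ → ℝ) (hp : ∀ n, p n ∈ Set.Icc (0 : ℝ) 1)
    (hpo : Tendsto (fun n : ℕ =>
        p n / ((n : ℝ) ^ (-(s : ℝ) / (t n : ℝ)) / (N1 n r s : ℝ))) atTop (nhds 0)) :
    Tendsto (fun n : ℕ => probContainsCycle n r s (t n) (p n)) atTop (nhds 0) := by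
  classical
  set K : ℝ := ((2 ^ r * r.factorial : ℕ) : ℝ) with hK
  have hK0 : (0 : ℝ) ≤ K := Nat.cast_nonneg _
  have hnonneg : ∀ n, 0 ≤ probContainsCycle n r s (t n) (p n) := by
    intro n
    unfold probContainsCycle randomSubgraphExp
    refine Finset.sum_nonneg fun S _ => mul_nonneg (mul_nonneg
      (pow_nonneg (hp n).1 _) (pow_nonneg (sub_nonneg.mpr (hp n).2) _)) ?_
    dsimp only
    split_ifs <;> norm_num
  have hbound : ∀ᶠ n in atTop, probContainsCycle n r s (t n) (p n) ≤
      K * (p n / ((n : ℝ) ^ (-(s : ℝ) / (t n : ℝ)) / (N1 n r s : ℝ))) := by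
    filter_upwards [hpo.eventually_lt_const zero_lt_one, eventually_ge_atTop (4 * r + 4)]
      with n hq1 hn
    set T := t n with hTdef
    have hT3 : 3 ≤ T := ht3 n
    have hT1 : 1 ≤ T := by omega
    have hp0 : (0 : ℝ) ≤ p n := (hp n).1
    have hp1 : p n ≤ 1 := (hp n).2
    have hn0 : (0 : ℝ) < (n : ℝ) := by
      have : 0 < n := by omega
      exact_mod_cast this
    have hN1pos : 0 < N1 n r s :=
      Nat.mul_pos (Nat.choose_pos hs.le) (Nat.choose_pos (by omega))
    have hN0 : (0 : ℝ) < (N1 n r s : ℝ) := by exact_mod_cast hN1pos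
    have hT0 : ((T : ℝ)) ≠ 0 := by positivity
    have hx0 : (0 : ℝ) < (n : ℝ) ^ ((s : ℝ) / (T : ℝ)) := Real.rpow_pos_of_pos hn0 _
    have hrw : p n / ((n : ℝ) ^ (-(s : ℝ) / (T : ℝ)) / (N1 n r s : ℝ))
        = p n * (N1 n r s : ℝ) * (n : ℝ) ^ ((s : ℝ) / (T : ℝ)) := by
      rw [neg_div, Real.rpow_neg hn0.le]
      field_simp
    have hq0 : 0 ≤ p n / ((n : ℝ) ^ (-(s : ℝ) / (T : ℝ)) / (N1 n r s : ℝ)) := by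
      rw [hrw]
      exact mul_nonneg (mul_nonneg hp0 hN0.le) hx0.le
    have h1 : probContainsCycle n r s T (p n) ≤
        (Fintype.card {x : Finset (Fin n) // x.card = r} : ℝ) *
          (N1 n r s : ℝ) ^ (T - 1) * p n ^ T := by
      unfold probContainsCycle randomSubgraphExp
      exact exp_le (johnsonGraph n r s) T hT1 (N1 n r s) (johnson_degree_le n r s)
        (p n) hp0 hp1
    have hcardV : Fintype.card {x : Finset (Fin n) // x.card = r} = n.choose r := by
      simp
    have hcast : ((n.choose r : ℕ) : ℝ) ≤ K * ((n ^ s * N1 n r s : ℕ) : ℝ) := by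
      rw [hK, ← Nat.cast_mul]
      exact_mod_cast choose_le_N1 r s hs.le n hn
    have hpow : (N1 n r s : ℝ) * (N1 n r s : ℝ) ^ (T - 1) = (N1 n r s : ℝ) ^ T := by
      rw [← pow_succ']
      congr 1
      omega
    have hxT : ((n : ℝ) ^ ((s : ℝ) / (T : ℝ))) ^ T = (n : ℝ) ^ s := by
      rw [← Real.rpow_natCast ((n : ℝ) ^ ((s : ℝ) / (T : ℝ))) T, ← Real.rpow_mul hn0.le,
        div_mul_cancel₀ _ hT0, Real.rpow_natCast]
    calc probContainsCycle n r s T (p n)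
        ≤ ((n.choose r : ℕ) : ℝ) * (N1 n r s : ℝ) ^ (T - 1) * p n ^ T := by
          rw [← hcardV]; exact h1
      _ ≤ (K * ((n ^ s * N1 n r s : ℕ) : ℝ)) * (N1 n r s : ℝ) ^ (T - 1) * p n ^ T := by
          refine mul_le_mul_of_nonneg_right (mul_le_mul_of_nonneg_right hcast ?_) ?_
          · exact pow_nonneg hN0.le _
          · exact pow_nonneg hp0 _
      _ = K * ((n : ℝ) ^ s * ((N1 n r s : ℝ) ^ T * p n ^ T)) := by
          push_cast
          rw [show K * ((n : ℝ) ^ s * (N1 n r s : ℝ)) * (N1 n r s : ℝ) ^ (T - 1) * p n ^ T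
            = K * ((n : ℝ) ^ s * (((N1 n r s : ℝ) * (N1 n r s : ℝ) ^ (T - 1)) * p n ^ T))
            from by ring, hpow]
      _ = K * (p n / ((n : ℝ) ^ (-(s : ℝ) / (T : ℝ)) / (N1 n r s : ℝ))) ^ T := by
          rw [hrw, mul_pow, mul_pow, hxT]
          ring
      _ ≤ K * (p n / ((n : ℝ) ^ (-(s : ℝ) / (T : ℝ)) / (N1 n r s : ℝ))) := by
          refine mul_le_mul_of_nonneg_left ?_ hK0
          exact pow_le_of_le_one hq0 hq1.le (by omega)
  refine squeeze_zero' (Eventually.of_forall hnonneg) hbound ?_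
  have h := hpo.const_mul K
  simpa using h
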